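/- Every positive contraction T on L¹ of a standard Borel probability space (X, 𝒜, μ) has a dilation to an integral-preserving positive contraction: there exists a measure space (X', 𝒜', μ') containing (X, 𝒜, μ), an integral-preserving positive contraction T' on L¹(μ'), and a conditional-expectation-type positive projection E : L¹(μ') → L¹(μ) such that E (T')ⁿ f = Tⁿ f for all n ≥ 0 and all f ∈ L¹(μ) (viewed inside L¹(μ')). -/
import Mathlib

open MeasureTheory

namespace PCDil

noncomputable section

variable {X : Type*} [MeasurableSpace X]

lemma embInl : MeasurableEmbedding (Sum.inl : ℝ → ℝ ⊕ ℝ) :=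
  ⟨Sum.inl_injective, measurable_inl, fun _ hs => hs.inl_image⟩

lemma embInr : MeasurableEmbedding (Sum.inr : ℝ → ℝ ⊕ ℝ) :=
  ⟨Sum.inr_injective, measurable_inr, fun _ hs => hs.inr_image⟩

/-- the doubled measure -/
def nu (μ : Measure X) (e : X → ℝ) : Measure (ℝ ⊕ ℝ) :=
  μ.map (Sum.inl ∘ e) + μ.map (Sum.inr ∘ e)

variable {μ : Measure X} {e : X → ℝ}

lemma le_nu_left : μ.map (Sum.inl ∘ e) ≤ nu μ e := Measure.le_add_right le_rfl
lemma le_nu_right : μ.map (Sum.inr ∘ e) ≤ nu μ e := Measure.le_add_left le_rfl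

section Pi

variable (he : MeasurableEmbedding e)

/-- generic component map : composition with a measurable embedding `j` whose
pushforward is dominated by `nu`. -/
def piFun {j : X → ℝ ⊕ ℝ} (hj : MeasurableEmbedding j) (hle : μ.map j ≤ nu μ e)
    (g : Lp ℝ 1 (nu μ e)) : Lp ℝ 1 μ :=
  (hj.integrable_map_iff.1 ((L1.integrable_coeFn g).mono_measure hle)).toL1 _

lemma piFun_coe {j : X → ℝ ⊕ ℝ} (hj : MeasurableEmbedding j) (hle : μ.map j ≤ nu μ e)
    (g : Lp ℝ 1 (nu μ e)) : ⇑(piFun hj hle g) =ᵐ[μ] fun x => g (j x) :=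
  Integrable.coeFn_toL1 _

lemma ae_comp {j : X → ℝ ⊕ ℝ} (hj : MeasurableEmbedding j) (hle : μ.map j ≤ nu μ e)
    {p : ℝ ⊕ ℝ → Prop} (h : ∀ᵐ y ∂nu μ e, p y) : ∀ᵐ x ∂μ, p (j x) :=
  hj.ae_map_iff.1 (h.filter_mono (ae_mono hle))

/-- generic component projection as a linear map -/
def Pi {j : X → ℝ ⊕ ℝ} (hj : MeasurableEmbedding j) (hle : μ.map j ≤ nu μ e) :
    Lp ℝ 1 (nu μ e) →ₗ[ℝ] Lp ℝ 1 μ where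
  toFun := piFun hj hle
  map_add' g h := by
    apply Lp.ext
    have e1 := piFun_coe hj hle (g + h)
    have e2 := piFun_coe hj hle g
    have e3 := piFun_coe hj hle h
    have e4 := ae_comp hj hle (Lp.coeFn_add g h)
    have e5 := Lp.coeFn_add (piFun hj hle g) (piFun hj hle h)
    filter_upwards [e1, e2, e3, e4, e5] with x h1 h2 h3 h4 h5
    simp only [h1, h5, Pi.add_apply, h2, h3, h4]
  map_smul' c g := by
    apply Lp.ext
    have e1 := piFun_coe hj hle (c • g)
    have e2 := piFun_coe hj hle g
    have e4 := ae_comp hj hle (Lp.coeFn_smul c g)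
    have e5 := Lp.coeFn_smul c (piFun hj hle g)
    filter_upwards [e1, e2, e4, e5] with x h1 h2 h4 h5
    simp only [h1, h5, Pi.smul_apply, h2, h4, RingHom.id_apply, smul_eq_mul]

lemma Pi_coe {j : X → ℝ ⊕ ℝ} (hj : MeasurableEmbedding j) (hle : μ.map j ≤ nu μ e)
    (g : Lp ℝ 1 (nu μ e)) : ⇑(Pi hj hle g) =ᵐ[μ] fun x => g (j x) :=
  piFun_coe hj hle g

end Pi

section components

variable (he : MeasurableEmbedding e)

def Pi1 (he : MeasurableEmbedding e) : Lp ℝ 1 (nu μ e) →ₗ[ℝ] Lp ℝ 1 μ :=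
  Pi (embInl.comp he) le_nu_left

def Pi2 (he : MeasurableEmbedding e) : Lp ℝ 1 (nu μ e) →ₗ[ℝ] Lp ℝ 1 μ :=
  Pi (embInr.comp he) le_nu_right

lemma Pi1_coe (g : Lp ℝ 1 (nu μ e)) :
    ⇑(Pi1 he g) =ᵐ[μ] fun x => g (Sum.inl (e x)) := Pi_coe _ _ g

lemma Pi2_coe (g : Lp ℝ 1 (nu μ e)) :
    ⇑(Pi2 he g) =ᵐ[μ] fun x => g (Sum.inr (e x)) := Pi_coe _ _ g

lemma ae_nu_iff (he : MeasurableEmbedding e) {p : ℝ ⊕ ℝ → Prop} :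
    (∀ᵐ y ∂nu μ e, p y) ↔
      (∀ᵐ x ∂μ, p (Sum.inl (e x))) ∧ ∀ᵐ x ∂μ, p (Sum.inr (e x)) := by
  rw [nu, ae_add_measure_iff, (embInl.comp he).ae_map_iff, (embInr.comp he).ae_map_iff]
  exact Iff.rfl

lemma integral_nu (he : MeasurableEmbedding e) {g : ℝ ⊕ ℝ → ℝ} (hg : Integrable g (nu μ e)) :
    ∫ y, g y ∂nu μ e = (∫ x, g (Sum.inl (e x)) ∂μ) + ∫ x, g (Sum.inr (e x)) ∂μ := by
  unfold nu at hg ⊢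
  obtain ⟨h1, h2⟩ := integrable_add_measure.mp hg
  rw [integral_add_measure h1 h2, (embInl.comp he).integral_map, (embInr.comp he).integral_map]
  exact rfl

/-- norm decomposition -/
lemma norm_decomp (g : Lp ℝ 1 (nu μ e)) : ‖g‖ = ‖Pi1 he g‖ + ‖Pi2 he g‖ := by
  rw [L1.norm_eq_integral_norm, L1.norm_eq_integral_norm (Pi1 he g),
    L1.norm_eq_integral_norm (Pi2 he g)]
  rw [integral_nu he (L1.integrable_coeFn g).norm]
  congr 1
  · exact integral_congr_ae ((Pi1_coe he g).mono fun x hx => by simp [hx])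
  · exact integral_congr_ae ((Pi2_coe he g).mono fun x hx => by simp [hx])

/-- integral decomposition -/
lemma integral_decomp (g : Lp ℝ 1 (nu μ e)) :
    ∫ y, g y ∂nu μ e = (∫ x, Pi1 he g x ∂μ) + ∫ x, Pi2 he g x ∂μ := by
  rw [integral_nu he (L1.integrable_coeFn g)]
  congr 1
  · exact (integral_congr_ae (Pi1_coe he g)).symm
  · exact (integral_congr_ae (Pi2_coe he g)).symm

lemma nonneg_decomp {g : Lp ℝ 1 (nu μ e)} (h : 0 ≤ᵐ[nu μ e] ⇑g) :
    (0 ≤ᵐ[μ] ⇑(Pi1 he g)) ∧ 0 ≤ᵐ[μ] ⇑(Pi2 he g) := by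
  obtain ⟨h1, h2⟩ := (ae_nu_iff he).1 h
  constructor
  · filter_upwards [h1, Pi1_coe he g] with x hx hc
    rw [hc]; exact hx
  · filter_upwards [h2, Pi2_coe he g] with x hx hc
    rw [hc]; exact hx

lemma nonneg_of_decomp {g : Lp ℝ 1 (nu μ e)} (h1 : 0 ≤ᵐ[μ] ⇑(Pi1 he g))
    (h2 : 0 ≤ᵐ[μ] ⇑(Pi2 he g)) : 0 ≤ᵐ[nu μ e] ⇑g := by
  refine (ae_nu_iff he).2 ⟨?_, ?_⟩
  · filter_upwards [h1, Pi1_coe he g] with x hx hc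
    rw [hc] at hx; exact hx
  · filter_upwards [h2, Pi2_coe he g] with x hx hc
    rw [hc] at hx; exact hx

lemma eq_of_decomp {g g' : Lp ℝ 1 (nu μ e)} (h1 : Pi1 he g = Pi1 he g')
    (h2 : Pi2 he g = Pi2 he g') : g = g' := by
  apply Lp.ext
  refine (ae_nu_iff he).2 ⟨?_, ?_⟩
  · have := Pi1_coe he g
    have h1' : ⇑(Pi1 he g) =ᵐ[μ] ⇑(Pi1 he g') := by rw [h1]
    filter_upwards [Pi1_coe he g, Pi1_coe he g', h1'] with x a b c
    rw [← a, ← b, c]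
  · have h2' : ⇑(Pi2 he g) =ᵐ[μ] ⇑(Pi2 he g') := by rw [h2]
    filter_upwards [Pi2_coe he g, Pi2_coe he g', h2'] with x a b c
    rw [← a, ← b, c]

end components

section iota

variable (he : MeasurableEmbedding e)

def rep (f : Lp ℝ 1 μ) : X → ℝ := (Lp.aestronglyMeasurable f).mk f

lemma rep_measurable (f : Lp ℝ 1 μ) : Measurable (rep f) :=
  (Lp.aestronglyMeasurable f).stronglyMeasurable_mk.measurable

lemma rep_ae (f : Lp ℝ 1 μ) : ⇑f =ᵐ[μ] rep f := (Lp.aestronglyMeasurable f).ae_eq_mk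

def extFun (he : MeasurableEmbedding e) (f : Lp ℝ 1 μ) : ℝ → ℝ :=
  (he.exists_measurable_extend (rep_measurable f) (fun _ => ⟨0⟩)).choose

lemma extFun_comp (f : Lp ℝ 1 μ) : ∀ x, extFun he f (e x) = rep f x := fun x =>
  congrFun (he.exists_measurable_extend (rep_measurable f) (fun _ => ⟨0⟩)).choose_spec.2 x

lemma integrable_elim1 (f : Lp ℝ 1 μ) :
    Integrable (Sum.elim (extFun he f) (fun _ => (0:ℝ))) (nu μ e) := by
  unfold nu
  rw [integrable_add_measure, (embInl.comp he).integrable_map_iff,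
    (embInr.comp he).integrable_map_iff]
  constructor
  · have h : (Sum.elim (extFun he f) (fun _ => (0:ℝ)) : ℝ ⊕ ℝ → ℝ) ∘ (Sum.inl ∘ e) = rep f := by
      funext x; simp [Function.comp, extFun_comp he f x]
    rw [h]
    exact (L1.integrable_coeFn f).congr (rep_ae f)
  · have h : (Sum.elim (extFun he f) (fun _ => (0:ℝ)) : ℝ ⊕ ℝ → ℝ) ∘ (Sum.inr ∘ e) = fun _ => (0:ℝ) := by
      funext x; simp [Function.comp]
    rw [h]
    exact integrable_zero _ _ _

lemma integrable_elim2 (f : Lp ℝ 1 μ) :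
    Integrable (Sum.elim (fun _ => (0:ℝ)) (extFun he f)) (nu μ e) := by
  unfold nu
  rw [integrable_add_measure, (embInl.comp he).integrable_map_iff,
    (embInr.comp he).integrable_map_iff]
  constructor
  · have h : (Sum.elim (fun _ => (0:ℝ)) (extFun he f) : ℝ ⊕ ℝ → ℝ) ∘ (Sum.inl ∘ e) = fun _ => (0:ℝ) := by
      funext x; simp [Function.comp]
    rw [h]
    exact integrable_zero _ _ _
  · have h : (Sum.elim (fun _ => (0:ℝ)) (extFun he f) : ℝ ⊕ ℝ → ℝ) ∘ (Sum.inr ∘ e) = rep f := by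
      funext x; simp [Function.comp, extFun_comp he f x]
    rw [h]
    exact (L1.integrable_coeFn f).congr (rep_ae f)

def iota1Fun (f : Lp ℝ 1 μ) : Lp ℝ 1 (nu μ e) := (integrable_elim1 he f).toL1 _

def iota2Fun (f : Lp ℝ 1 μ) : Lp ℝ 1 (nu μ e) := (integrable_elim2 he f).toL1 _

lemma iota1_coe (f : Lp ℝ 1 μ) :
    ⇑(iota1Fun he f) =ᵐ[nu μ e] Sum.elim (extFun he f) (fun _ => (0:ℝ)) :=
  Integrable.coeFn_toL1 _

lemma iota2_coe (f : Lp ℝ 1 μ) :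
    ⇑(iota2Fun he f) =ᵐ[nu μ e] Sum.elim (fun _ => (0:ℝ)) (extFun he f) :=
  Integrable.coeFn_toL1 _

lemma Pi1_iota1 (f : Lp ℝ 1 μ) : Pi1 he (iota1Fun he f) = f := by
  apply Lp.ext
  have h2 := ae_comp (embInl.comp he) le_nu_left (iota1_coe he f)
  filter_upwards [Pi1_coe he (iota1Fun he f), h2, rep_ae f] with x a b c
  simp only [Function.comp_apply, Sum.elim_inl] at b
  rw [a]
  exact b.trans ((extFun_comp he f x).trans c.symm)

lemma Pi2_iota1 (f : Lp ℝ 1 μ) : Pi2 he (iota1Fun he f) = 0 := by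
  apply Lp.ext
  have h2 := ae_comp (embInr.comp he) le_nu_right (iota1_coe he f)
  filter_upwards [Pi2_coe he (iota1Fun he f), h2, Lp.coeFn_zero ℝ 1 μ] with x a b c
  simp only [Function.comp_apply, Sum.elim_inr] at b
  rw [a, c]
  exact b

lemma Pi1_iota2 (f : Lp ℝ 1 μ) : Pi1 he (iota2Fun he f) = 0 := by
  apply Lp.ext
  have h2 := ae_comp (embInl.comp he) le_nu_left (iota2_coe he f)
  filter_upwards [Pi1_coe he (iota2Fun he f), h2, Lp.coeFn_zero ℝ 1 μ] with x a b c
  simp only [Function.comp_apply, Sum.elim_inl] at b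
  rw [a, c]
  exact b

lemma Pi2_iota2 (f : Lp ℝ 1 μ) : Pi2 he (iota2Fun he f) = f := by
  apply Lp.ext
  have h2 := ae_comp (embInr.comp he) le_nu_right (iota2_coe he f)
  filter_upwards [Pi2_coe he (iota2Fun he f), h2, rep_ae f] with x a b c
  simp only [Function.comp_apply, Sum.elim_inr] at b
  rw [a]
  exact b.trans ((extFun_comp he f x).trans c.symm)

def Iota1 (he : MeasurableEmbedding e) : Lp ℝ 1 μ →ₗ[ℝ] Lp ℝ 1 (nu μ e) where
  toFun := iota1Fun he
  map_add' f g := by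
    refine eq_of_decomp he ?_ ?_ <;>
      simp [map_add, Pi1_iota1, Pi2_iota1]
  map_smul' c f := by
    refine eq_of_decomp he ?_ ?_ <;>
      simp [_root_.map_smul, Pi1_iota1, Pi2_iota1]

def Iota2 (he : MeasurableEmbedding e) : Lp ℝ 1 μ →ₗ[ℝ] Lp ℝ 1 (nu μ e) where
  toFun := iota2Fun he
  map_add' f g := by
    refine eq_of_decomp he ?_ ?_ <;>
      simp [map_add, Pi1_iota2, Pi2_iota2]
  map_smul' c f := by
    refine eq_of_decomp he ?_ ?_ <;>
      simp [_root_.map_smul, Pi1_iota2, Pi2_iota2]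

@[simp] lemma Pi1_Iota1 (f : Lp ℝ 1 μ) : Pi1 he (Iota1 he f) = f := Pi1_iota1 he f
@[simp] lemma Pi2_Iota1 (f : Lp ℝ 1 μ) : Pi2 he (Iota1 he f) = 0 := Pi2_iota1 he f
@[simp] lemma Pi1_Iota2 (f : Lp ℝ 1 μ) : Pi1 he (Iota2 he f) = 0 := Pi1_iota2 he f
@[simp] lemma Pi2_Iota2 (f : Lp ℝ 1 μ) : Pi2 he (Iota2 he f) = f := Pi2_iota2 he f

lemma norm_Iota1 (f : Lp ℝ 1 μ) : ‖Iota1 he f‖ = ‖f‖ := by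
  rw [norm_decomp he (Iota1 he f), Pi1_Iota1, Pi2_Iota1, norm_zero, add_zero]

lemma nonneg_Iota1 {f : Lp ℝ 1 μ} (hf : 0 ≤ᵐ[μ] ⇑f) : 0 ≤ᵐ[nu μ e] ⇑(Iota1 he f) := by
  refine nonneg_of_decomp he ?_ ?_
  · rw [Pi1_Iota1]; exact hf
  · rw [Pi2_Iota1]
    filter_upwards [Lp.coeFn_zero ℝ 1 μ] with x hx
    exact hx.symm.le

end iota

section op

variable [IsFiniteMeasure μ]

def oneL (μ : Measure X) [IsFiniteMeasure μ] : Lp ℝ 1 μ :=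
  (integrable_const (1:ℝ)).toL1 _

lemma oneL_coe : ⇑(oneL μ) =ᵐ[μ] fun _ => (1:ℝ) := Integrable.coeFn_toL1 _

lemma oneL_nonneg : 0 ≤ᵐ[μ] ⇑(oneL μ) := by
  filter_upwards [oneL_coe (μ := μ)] with x hx
  rw [hx]; norm_num

lemma norm_oneL [IsProbabilityMeasure μ] : ‖oneL μ‖ = 1 := by
  rw [L1.norm_eq_integral_norm]
  have h : (fun x => ‖(oneL μ) x‖) =ᵐ[μ] fun _ => (1:ℝ) := by
    filter_upwards [oneL_coe (μ := μ)] with x hx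
    simp [hx]
  rw [integral_congr_ae h]
  simp

lemma integral_oneL [IsProbabilityMeasure μ] : ∫ x, oneL μ x ∂μ = 1 := by
  rw [integral_congr_ae (oneL_coe (μ := μ))]
  simp

/-- the integral as a linear map -/
def IntL (μ : Measure X) : Lp ℝ 1 μ →ₗ[ℝ] ℝ where
  toFun f := ∫ x, f x ∂μ
  map_add' f g := by
    show ∫ x, (f + g) x ∂μ = (∫ x, f x ∂μ) + ∫ x, g x ∂μ
    rw [integral_congr_ae (Lp.coeFn_add f g)]
    exact integral_add (L1.integrable_coeFn f) (L1.integrable_coeFn g)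
  map_smul' c f := by
    show ∫ x, (c • f) x ∂μ = c • ∫ x, f x ∂μ
    rw [integral_congr_ae (Lp.coeFn_smul c f)]
    simp [integral_smul, MeasureTheory.integral_const_mul]

omit [IsFiniteMeasure μ] in
lemma IntL_apply (f : Lp ℝ 1 μ) : IntL μ f = ∫ x, f x ∂μ := rfl

omit [IsFiniteMeasure μ] in
lemma norm_eq_integral_of_nonneg {f : Lp ℝ 1 μ} (hf : 0 ≤ᵐ[μ] ⇑f) :
    ‖f‖ = ∫ x, f x ∂μ := by
  rw [L1.norm_eq_integral_norm]
  apply integral_congr_ae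
  filter_upwards [hf] with x hx
  exact Real.norm_of_nonneg hx

omit [IsFiniteMeasure μ] in
lemma integral_le_norm (f : Lp ℝ 1 μ) : ∫ x, f x ∂μ ≤ ‖f‖ := by
  rw [L1.norm_eq_integral_norm]
  refine integral_mono (L1.integrable_coeFn f) (L1.integrable_coeFn f).norm fun x => ?_
  rw [Real.norm_eq_abs]
  exact le_abs_self _

section key

omit [IsFiniteMeasure μ]

variable (T : Lp ℝ 1 μ →ₗ[ℝ] Lp ℝ 1 μ)
  (hpos : ∀ f : Lp ℝ 1 μ, 0 ≤ᵐ[μ] ⇑f → 0 ≤ᵐ[μ] ⇑(T f))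
  (hcontr : ∀ f : Lp ℝ 1 μ, ‖T f‖ ≤ ‖f‖)

include hpos hcontr

lemma int_T_le {f : Lp ℝ 1 μ} (hf : 0 ≤ᵐ[μ] ⇑f) : IntL μ (T f) ≤ IntL μ f := by
  rw [IntL_apply, IntL_apply, ← norm_eq_integral_of_nonneg hf]
  exact (integral_le_norm (T f)).trans (hcontr f)

lemma posPart_nonneg (f : Lp ℝ 1 μ) : 0 ≤ᵐ[μ] ⇑(Lp.posPart f) := by
  filter_upwards [Lp.coeFn_posPart f] with x hx
  rw [hx]; exact le_max_right _ _

lemma negPart_nonneg (f : Lp ℝ 1 μ) : 0 ≤ᵐ[μ] ⇑(Lp.negPart f) := by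
  filter_upwards [Lp.coeFn_negPart f] with x hx
  rw [hx]
  simp [min_le_right, neg_nonneg.2 (min_le_right (f x) 0)]

lemma posPart_sub_negPart (f : Lp ℝ 1 μ) : f = Lp.posPart f - Lp.negPart f := by
  apply Lp.ext
  filter_upwards [Lp.coeFn_sub (Lp.posPart f) (Lp.negPart f), Lp.coeFn_posPart f,
    Lp.coeFn_negPart f] with x h1 h2 h3
  rw [h1, Pi.sub_apply, h2, h3]
  have := max_add_min (f x) 0
  linarith

lemma norm_split (f : Lp ℝ 1 μ) : ‖f‖ = ‖Lp.posPart f‖ + ‖Lp.negPart f‖ := by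
  rw [L1.norm_eq_integral_norm f, norm_eq_integral_of_nonneg (posPart_nonneg T hpos hcontr f),
    norm_eq_integral_of_nonneg (negPart_nonneg T hpos hcontr f),
    ← integral_add (L1.integrable_coeFn _) (L1.integrable_coeFn _)]
  apply integral_congr_ae
  filter_upwards [Lp.coeFn_posPart f, Lp.coeFn_negPart f] with x h2 h3
  rw [h2, h3, Real.norm_eq_abs]
  rcases le_total (f x) 0 with h | h
  · rw [abs_of_nonpos h, max_eq_right h, min_eq_left h]; ring
  · rw [abs_of_nonneg h, max_eq_left h, min_eq_right h]; ring

lemma key_ineq (f : Lp ℝ 1 μ) : ‖T f‖ + |IntL μ f - IntL μ (T f)| ≤ ‖f‖ := by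
  set p := Lp.posPart f with hpdef
  set n := Lp.negPart f with hndef
  have hp := posPart_nonneg T hpos hcontr f
  have hn := negPart_nonneg T hpos hcontr f
  have hsub := posPart_sub_negPart T hpos hcontr f
  have hTp := hpos p hp
  have hTn := hpos n hn
  have e1 : T f = T p - T n := by rw [← map_sub, ← hsub]
  have hTnorm : ‖T f‖ ≤ ‖T p‖ + ‖T n‖ := by rw [e1]; exact norm_sub_le _ _
  have hTp' : ‖T p‖ = IntL μ (T p) := norm_eq_integral_of_nonneg hTp
  have hTn' : ‖T n‖ = IntL μ (T n) := norm_eq_integral_of_nonneg hTn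
  have hIf : IntL μ f = IntL μ p - IntL μ n := by rw [hsub, map_sub]
  have hITf : IntL μ (T f) = IntL μ (T p) - IntL μ (T n) := by rw [e1, map_sub]
  have hap : IntL μ (T p) ≤ IntL μ p := int_T_le T hpos hcontr hp
  have han : IntL μ (T n) ≤ IntL μ n := int_T_le T hpos hcontr hn
  have hap0 : 0 ≤ IntL μ (T p) := integral_nonneg_of_ae hTp
  have han0 : 0 ≤ IntL μ (T n) := integral_nonneg_of_ae hTn
  have habs : |IntL μ f - IntL μ (T f)| ≤
      (IntL μ p - IntL μ (T p)) + (IntL μ n - IntL μ (T n)) := by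
    rw [hIf, hITf]
    refine abs_le.mpr ⟨by linarith, by linarith⟩
  have hnorm := norm_split T hpos hcontr f
  have hpnorm : ‖p‖ = IntL μ p := norm_eq_integral_of_nonneg hp
  have hnnorm : ‖n‖ = IntL μ n := norm_eq_integral_of_nonneg hn
  rw [hnorm, hpnorm, hnnorm]
  linarith

end key

end op

section Tdil

variable (he : MeasurableEmbedding e) [IsFiniteMeasure μ]
  (T : Lp ℝ 1 μ →ₗ[ℝ] Lp ℝ 1 μ)

def Tdil : Lp ℝ 1 (nu μ e) →ₗ[ℝ] Lp ℝ 1 (nu μ e) :=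
  (((Iota1 he).comp T).comp (Pi1 he))
    + (LinearMap.smulRight (IntL μ - (IntL μ).comp T) (iota2Fun he (oneL μ))).comp (Pi1 he)
    + (Iota2 he).comp (Pi2 he)

lemma Tdil_apply (g : Lp ℝ 1 (nu μ e)) :
    Tdil he T g = Iota1 he (T (Pi1 he g))
      + (IntL μ (Pi1 he g) - IntL μ (T (Pi1 he g))) • Iota2 he (oneL μ)
      + Iota2 he (Pi2 he g) := rfl

lemma Pi1_Tdil (g : Lp ℝ 1 (nu μ e)) : Pi1 he (Tdil he T g) = T (Pi1 he g) := by
  rw [Tdil_apply, map_add, map_add, _root_.map_smul, Pi1_Iota1, Pi1_Iota2, Pi1_Iota2]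
  simp

lemma Pi2_Tdil (g : Lp ℝ 1 (nu μ e)) :
    Pi2 he (Tdil he T g)
      = (IntL μ (Pi1 he g) - IntL μ (T (Pi1 he g))) • oneL μ + Pi2 he g := by
  rw [Tdil_apply, map_add, map_add, _root_.map_smul, Pi2_Iota1, Pi2_Iota2, Pi2_Iota2]
  simp

end Tdil

end

end PCDil

open PCDil

/-- **Reduction to the integral-preserving case.** Every positive contraction
`T` on `L¹` of a standard Borel probability space has a dilation to an
integral-preserving positive contraction: there are a measure space
`(X', μ')`, a positive isometric embedding `D : L¹(μ) → L¹(μ')`, an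
integral-preserving positive contraction `T'` on `L¹(μ')`, and a positive
contractive projection `E : L¹(μ') → L¹(μ)` with `E ∘ D = id` such that
`E (T')ⁿ (D f) = Tⁿ f` for all `n ≥ 0` and `f ∈ L¹(μ)`. -/
theorem positive_contraction_dilates_to_integral_preserving
    {X : Type*} [MeasurableSpace X] [StandardBorelSpace X]
    (μ : Measure X) [IsProbabilityMeasure μ]
    (T : Lp ℝ 1 μ →ₗ[ℝ] Lp ℝ 1 μ)
    (hpos : ∀ f : Lp ℝ 1 μ, 0 ≤ᵐ[μ] ⇑f → 0 ≤ᵐ[μ] ⇑(T f))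
    (hcontr : ∀ f : Lp ℝ 1 μ, ‖T f‖ ≤ ‖f‖) :
    ∃ (X' : Type) (_ : MeasurableSpace X') (μ' : Measure X')
      (D : Lp ℝ 1 μ →ₗᵢ[ℝ] Lp ℝ 1 μ')
      (T' : Lp ℝ 1 μ' →ₗ[ℝ] Lp ℝ 1 μ')
      (E : Lp ℝ 1 μ' →ₗ[ℝ] Lp ℝ 1 μ),
      (∀ f : Lp ℝ 1 μ, 0 ≤ᵐ[μ] ⇑f → 0 ≤ᵐ[μ'] ⇑(D f)) ∧
      (∀ g : Lp ℝ 1 μ', 0 ≤ᵐ[μ'] ⇑g → 0 ≤ᵐ[μ'] ⇑(T' g)) ∧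
      (∀ g : Lp ℝ 1 μ', ‖T' g‖ ≤ ‖g‖) ∧
      (∀ g : Lp ℝ 1 μ', ∫ x, T' g x ∂μ' = ∫ x, g x ∂μ') ∧
      (∀ g : Lp ℝ 1 μ', 0 ≤ᵐ[μ'] ⇑g → 0 ≤ᵐ[μ] ⇑(E g)) ∧
      (∀ g : Lp ℝ 1 μ', ‖E g‖ ≤ ‖g‖) ∧
      (∀ f : Lp ℝ 1 μ, E (D f) = f) ∧
      (∀ (n : ℕ) (f : Lp ℝ 1 μ), E ((T' ^ n) (D f)) = (T ^ n) f) := by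
  obtain ⟨e, he⟩ := exists_measurableEmbedding_real X
  refine ⟨ℝ ⊕ ℝ, inferInstance, nu μ e,
    ⟨Iota1 he, fun f => norm_Iota1 he f⟩, Tdil he T, Pi1 he,
    ?_, ?_, ?_, ?_, ?_, ?_, ?_, ?_⟩
  · exact fun f hf => nonneg_Iota1 he hf
  · -- positivity of T'
    intro g hg
    obtain ⟨h1, h2⟩ := nonneg_decomp he hg
    have hc : 0 ≤ IntL μ (Pi1 he g) - IntL μ (T (Pi1 he g)) := by
      have := int_T_le T hpos hcontr h1
      linarith
    refine nonneg_of_decomp he ?_ ?_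
    · rw [Pi1_Tdil]
      exact hpos _ h1
    · rw [Pi2_Tdil]
      set c := IntL μ (Pi1 he g) - IntL μ (T (Pi1 he g)) with hcdef
      filter_upwards [Lp.coeFn_add (c • oneL μ) (Pi2 he g), Lp.coeFn_smul c (oneL μ),
        oneL_coe (μ := μ), h2] with x e1 e2 e3 e4
      rw [e1, Pi.add_apply, e2, Pi.smul_apply, e3]
      have : (0:ℝ) ≤ c * 1 := by simpa using hc
      simp only [smul_eq_mul]
      linarith
  · -- contraction
    intro g
    have hkey := key_ineq T hpos hcontr (Pi1 he g)
    have hns : ‖Tdil he T g‖ = ‖Pi1 he (Tdil he T g)‖ + ‖Pi2 he (Tdil he T g)‖ :=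
      norm_decomp he _
    rw [hns, Pi1_Tdil, Pi2_Tdil, norm_decomp he g]
    have h1 : ‖(IntL μ (Pi1 he g) - IntL μ (T (Pi1 he g))) • oneL μ + Pi2 he g‖
        ≤ |IntL μ (Pi1 he g) - IntL μ (T (Pi1 he g))| + ‖Pi2 he g‖ := by
      refine (norm_add_le _ _).trans ?_
      rw [norm_smul, Real.norm_eq_abs, norm_oneL, mul_one]
    linarith
  · -- integral preserving
    intro g
    have hdec : ∀ gg : Lp ℝ 1 (nu μ e),
        ∫ y, gg y ∂(nu μ e) = IntL μ (Pi1 he gg) + IntL μ (Pi2 he gg) :=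
      fun gg => integral_decomp he gg
    rw [hdec, hdec, Pi1_Tdil, Pi2_Tdil, map_add, _root_.map_smul]
    have hone : IntL μ (oneL μ) = 1 := integral_oneL
    rw [hone]
    simp only [smul_eq_mul, mul_one]
    ring
  · exact fun g hg => (nonneg_decomp he hg).1
  · intro g
    rw [norm_decomp he g]
    have := norm_nonneg (Pi2 he g)
    linarith
  · exact fun f => Pi1_iota1 he f
  · intro n f
    induction n with
    | zero => simpa using Pi1_iota1 he f
    | succ n ih =>
      rw [pow_succ', pow_succ', Module.End.mul_apply, Module.End.mul_apply, Pi1_Tdil, ih]
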